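/- Let (P,⪯₊,⪯₋) be a double poset. The origin of ℝ^P × ℝ lies in the interior of the double order polytope T_O(P,⪯₊,⪯₋) if and only if (P,⪯₊,⪯₋) is compatible. -/

import Mathlib

open Set Pointwise

/-- The order polytope of a finite poset `(P, le)`: order-preserving maps into `[0,1]`. -/
def orderPoly (P : Type*) [Fintype P] (le : P → P → Prop) : Set (P → ℝ) :=
  {f | (∀ a, 0 ≤ f a ∧ f a ≤ 1) ∧ ∀ a b, le a b → f a ≤ f b}

/-- The double order polytope `T_O(P, lep, lem)`. -/
def doubleOrderPoly (P : Type*) [Fintype P] (lep lem : P → P → Prop) :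
    Set ((P → ℝ) × ℝ) :=
  convexHull ℝ
    (((fun f => (f, (1 : ℝ))) '' ((2 : ℝ) • orderPoly P lep)) ∪
     ((fun f => (f, (-1 : ℝ))) '' ((-2 : ℝ) • orderPoly P lem)))

/-- A double poset is compatible if some linear order refines both partial orders. -/
def Compatible (P : Type*) (lep lem : P → P → Prop) : Prop :=
  ∃ l : P → P → Prop, IsLinearOrder P l ∧
    (∀ a b, lep a b → l a b) ∧ (∀ a b, lem a b → l a b)

/-! ### Auxiliary material -/

namespace DOPAux

variable {P : Type*} [Fintype P]

/-- Pairing of two functions `P → ℝ`. -/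
def pr (c f : P → ℝ) : ℝ := ∑ x, c x * f x

lemma pr_add_left (c d f : P → ℝ) : pr (c + d) f = pr c f + pr d f := by
  simp [pr, add_mul, Finset.sum_add_distrib]

lemma pr_zero_left (f : P → ℝ) : pr 0 f = 0 := by simp [pr]

lemma pr_add_right (c f g : P → ℝ) : pr c (f + g) = pr c f + pr c g := by
  simp [pr, mul_add, Finset.sum_add_distrib]

lemma pr_smul_right (c : P → ℝ) (a : ℝ) (f : P → ℝ) : pr c (a • f) = a * pr c f := by
  simp only [pr, Finset.mul_sum, Pi.smul_apply, smul_eq_mul]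
  exact Finset.sum_congr rfl fun x _ => by ring

lemma pr_single [DecidableEq P] (y : P) (f : P → ℝ) : pr (Pi.single y 1) f = f y := by
  simp [pr, Pi.single_apply, ite_mul]

lemma pr_sub_single [DecidableEq P] (x y : P) (f : P → ℝ) :
    pr (Pi.single y 1 - Pi.single x 1) f = f y - f x := by
  simp [pr, sub_mul, Finset.sum_sub_distrib, Pi.single_apply, ite_mul]

lemma pr_pos_self {c : P → ℝ} (hc : c ≠ 0) : 0 < pr c c := by
  have h := Function.ne_iff.mp hc
  obtain ⟨x, hx⟩ := h
  refine Finset.sum_pos' (fun i _ => mul_self_nonneg _) ⟨x, Finset.mem_univ x, ?_⟩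
  exact mul_self_pos.mpr hx

/-- The additive monoid generated by vectors `e_y - e_x` for `le x y`. -/
def edgeCone [DecidableEq P] (le : P → P → Prop) : AddSubmonoid (P → ℝ) :=
  AddSubmonoid.closure {c | ∃ x y, le x y ∧ x ≠ y ∧ c = Pi.single y 1 - Pi.single x 1}

lemma edgeCone_nonneg [DecidableEq P] {le : P → P → Prop} {c : P → ℝ}
    (hc : c ∈ edgeCone le) {f : P → ℝ} (hf : ∀ a b, le a b → f a ≤ f b) :
    0 ≤ pr c f := by
  induction hc using AddSubmonoid.closure_induction with
  | mem x hx =>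
    obtain ⟨a, b, hab, -, rfl⟩ := hx
    rw [pr_sub_single]
    have := hf a b hab
    linarith
  | zero => rw [pr_zero_left]
  | add x y hx hy ihx ihy => rw [pr_add_left]; linarith

/-- rank function of a partial order. -/
noncomputable def rk (le : P → P → Prop) (x : P) : ℝ :=
  (Set.ncard {z | le z x} : ℝ)

lemma rk_mono {le : P → P → Prop} (hle : IsPartialOrder P le) {x y : P} (h : le x y) :
    rk le x ≤ rk le y := by
  have hsub : {z | le z x} ⊆ {z | le z y} := fun z hz => hle.trans _ _ _ hz h
  unfold rk
  exact_mod_cast Set.ncard_le_ncard hsub (Set.toFinite _)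

lemma rk_strict {le : P → P → Prop} (hle : IsPartialOrder P le) {x y : P} (h : le x y)
    (hne : x ≠ y) : rk le x < rk le y := by
  have hsub : {z | le z x} ⊆ {z | le z y} := fun z hz => hle.trans _ _ _ hz h
  have hss : {z | le z x} ⊂ {z | le z y} := by
    refine ⟨hsub, fun hsub' => ?_⟩
    have : le y x := hsub' (hle.refl y)
    exact hne (hle.antisymm _ _ h this)
  unfold rk
  exact_mod_cast Set.ncard_lt_ncard hss (Set.toFinite _)

lemma rk_monotone {le : P → P → Prop} (hle : IsPartialOrder P le) :
    ∀ a b, le a b → rk le a ≤ rk le b := fun _ _ h => rk_mono hle h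

/-- Key: an element of the edge cone pairing to zero with the rank function is zero. -/
lemma edgeCone_key [DecidableEq P] {le : P → P → Prop} (hle : IsPartialOrder P le)
    {c : P → ℝ} (hc : c ∈ edgeCone le) :
    0 ≤ pr c (rk le) ∧ (pr c (rk le) = 0 → c = 0) := by
  induction hc using AddSubmonoid.closure_induction with
  | mem x hx =>
    obtain ⟨a, b, hab, hne, rfl⟩ := hx
    rw [pr_sub_single]
    have hlt := rk_strict hle hab hne
    constructor
    · linarith
    · intro h; exfalso; linarith
  | zero => simp [pr_zero_left]
  | add x y hx hy ihx ihy =>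
    rw [pr_add_left]
    refine ⟨by linarith [ihx.1, ihy.1], fun h => ?_⟩
    have hx0 : pr x (rk le) = 0 := by linarith [ihx.1, ihy.1]
    have hy0 : pr y (rk le) = 0 := by linarith [ihx.1, ihy.1]
    rw [ihx.2 hx0, ihy.2 hy0, add_zero]

section Chains

variable (lep lem : P → P → Prop)

/-- One "plus-then-minus" step. -/
def Q (x y : P) : Prop := ∃ z, lep x z ∧ lem z y

variable {lep lem}
variable (hp : IsPartialOrder P lep) (hm : IsPartialOrder P lem)

include hp hm in
lemma chain_decomp [DecidableEq P] {a b : P} (h : Relation.ReflTransGen (Q lep lem) a b) :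
    ∃ cp cm : P → ℝ, cp ∈ edgeCone lep ∧ cm ∈ edgeCone lem ∧
      cp + cm = Pi.single b 1 - Pi.single a 1 ∧ (cp = 0 → lem a b) := by
  induction h with
  | refl =>
    exact ⟨0, 0, zero_mem _, zero_mem _, by simp, fun _ => hm.refl a⟩
  | @tail b c hab hbc ih =>
    obtain ⟨z, hbz, hzc⟩ := hbc
    obtain ⟨cp, cm, hcp, hcm, hsum, hvan⟩ := ih
    by_cases hzb : b = z
    · -- lep-step is trivial
      subst hzb
      by_cases hcb : b = c
      · exact ⟨cp, cm, hcp, hcm, by rwa [hcb] at hsum, fun h => by rw [← hcb]; exact hvan h⟩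
      · refine ⟨cp, cm + (Pi.single c 1 - Pi.single b 1), hcp, ?_, ?_, ?_⟩
        · exact add_mem hcm (AddSubmonoid.subset_closure ⟨b, c, hzc, hcb, rfl⟩)
        · rw [← add_assoc, hsum]; abel
        · intro h
          exact hm.trans _ _ _ (hvan h) hzc
    · -- nontrivial lep-step
      refine ⟨cp + (Pi.single z 1 - Pi.single b 1), cm + (Pi.single c 1 - Pi.single z 1),
        add_mem hcp (AddSubmonoid.subset_closure ⟨b, z, hbz, hzb, rfl⟩), ?_, ?_, ?_⟩
      · by_cases hzc' : z = c
        · subst hzc'; simpa using hcm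
        · exact add_mem hcm (AddSubmonoid.subset_closure ⟨z, c, hzc, hzc', rfl⟩)
      · have hre : cp + (Pi.single z 1 - Pi.single b 1) + (cm + (Pi.single c 1 - Pi.single z 1))
            = (cp + cm) + (Pi.single c 1 - Pi.single b 1) := by abel
        rw [hre, hsum]; abel
      · intro h
        exfalso
        have h1 := (edgeCone_key hp hcp).1
        have h2 : pr (cp + (Pi.single z 1 - Pi.single b 1)) (rk lep) = 0 := by
          rw [h, pr_zero_left]
        rw [pr_add_left, pr_sub_single] at h2
        have hbz' : rk lep b < rk lep z := rk_strict hp hbz hzb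
        linarith

include hp hm in
/-- From incompatibility, produce a separating vector. -/
lemma exists_sep [DecidableEq P] (h : ¬ Compatible P lep lem) :
    ∃ c : P → ℝ, c ≠ 0 ∧ (∀ f ∈ orderPoly P lep, 0 ≤ pr c f) ∧
      (∀ g ∈ orderPoly P lem, pr c g ≤ 0) := by
  set R : P → P → Prop := Relation.ReflTransGen (fun x y => lep x y ∨ lem x y) with hR
  by_cases hanti : ∀ a b, R a b → R b a → a = b
  · exfalso
    apply h
    haveI : IsPartialOrder P R :=
      { refl := fun a => Relation.ReflTransGen.refl
        trans := fun a b c hab hbc => hab.trans hbc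
        antisymm := hanti }
    obtain ⟨s, hs, hRs⟩ := extend_partialOrder R
    refine ⟨s, hs, fun a b hab => hRs _ _ ?_, fun a b hab => hRs _ _ ?_⟩
    · exact Relation.ReflTransGen.single (Or.inl hab)
    · exact Relation.ReflTransGen.single (Or.inr hab)
  · push_neg at hanti
    obtain ⟨a, b, hab, hba, hne⟩ := hanti
    have hQ : ∀ {x y : P}, R x y → Relation.ReflTransGen (Q lep lem) x y := by
      intro x y hxy
      refine Relation.ReflTransGen.mono ?_ _ _ hxy
      rintro u v (huv | huv)
      · exact ⟨v, huv, hm.refl v⟩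
      · exact ⟨u, hp.refl u, huv⟩
    obtain ⟨cp₁, cm₁, hcp₁, hcm₁, hsum₁, hvan₁⟩ := chain_decomp hp hm (hQ hab)
    obtain ⟨cp₂, cm₂, hcp₂, hcm₂, hsum₂, hvan₂⟩ := chain_decomp hp hm (hQ hba)
    refine ⟨cp₁ + cp₂, ?_, ?_, ?_⟩
    · intro hc0
      have h1 := (edgeCone_key hp hcp₁)
      have h2 := (edgeCone_key hp hcp₂)
      have h0 : pr (cp₁ + cp₂) (rk lep) = 0 := by rw [hc0, pr_zero_left]
      rw [pr_add_left] at h0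
      have e1 : cp₁ = 0 := h1.2 (by linarith [h1.1, h2.1])
      have e2 : cp₂ = 0 := h2.2 (by linarith [h1.1, h2.1])
      exact hne (hm.antisymm _ _ (hvan₁ e1) (hvan₂ e2))
    · intro f hf
      exact edgeCone_nonneg (add_mem hcp₁ hcp₂) (fun u v huv => hf.2 u v huv)
    · intro g hg
      have hkey : cp₁ + cp₂ = -(cm₁ + cm₂) := by
        have : (cp₁ + cm₁) + (cp₂ + cm₂) = 0 := by rw [hsum₁, hsum₂]; abel
        have h' : (cp₁ + cp₂) + (cm₁ + cm₂) = 0 := by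
          rw [← this]; abel
        exact eq_neg_of_add_eq_zero_left h'
      rw [hkey]
      have := edgeCone_nonneg (add_mem hcm₁ hcm₂) (fun u v huv => hg.2 u v huv) (f := g)
      have hneg : pr (-(cm₁ + cm₂)) g = -pr (cm₁ + cm₂) g := by
        simp only [pr, ← Finset.sum_neg_distrib]
        exact Finset.sum_congr rfl fun x _ => by simp; ring
      rw [hneg]
      linarith

end Chains

section Backward

variable {P : Type*} [Fintype P]

lemma compat_mem_interior [DecidableEq P] {lep lem : P → P → Prop}
    (hcomp : Compatible P lep lem) :
    (0 : (P → ℝ) × ℝ) ∈ interior (doubleOrderPoly P lep lem) := by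
  obtain ⟨l, hl, hlp, hlm⟩ := hcomp
  haveI := hl
  classical
  set χ : P → P → ℝ := fun s x => if l s x then 1 else 0 with hχdef
  have hχmem : ∀ (le : P → P → Prop), (∀ a b, le a b → l a b) → ∀ s, χ s ∈ orderPoly P le := by
    intro le hle s
    refine ⟨fun a => ?_, fun a b hab => ?_⟩
    · by_cases h : l s a <;> simp [χ, h]
    · by_cases h : l s a
      · have h2 : l s b := _root_.trans_of l h (hle _ _ hab)
        simp [χ, h, h2]
      · simp only [χ, h, if_false]
        split <;> norm_num
  set S₀ : Set ((P → ℝ) × ℝ) :=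
    insert ((0 : P → ℝ), (1 : ℝ)) (Set.range fun s => ((2 : ℝ) • χ s, (1 : ℝ))) with hS₀
  set S : Set ((P → ℝ) × ℝ) := S₀ ∪ -S₀ with hS
  -- S is contained in the generating set of the double order polytope
  have hzerop : (0 : P → ℝ) ∈ orderPoly P lep := ⟨fun a => by norm_num, fun a b _ => le_refl _⟩
  have hzerom : (0 : P → ℝ) ∈ orderPoly P lem := ⟨fun a => by norm_num, fun a b _ => le_refl _⟩
  have hS₀sub : ∀ p ∈ S₀,
      p ∈ ((fun f => (f, (1 : ℝ))) '' ((2 : ℝ) • orderPoly P lep)) := by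
    rintro p (rfl | ⟨s, rfl⟩)
    · exact ⟨0, ⟨0, hzerop, smul_zero 2⟩, rfl⟩
    · exact ⟨(2 : ℝ) • χ s, ⟨χ s, hχmem lep hlp s, rfl⟩, rfl⟩
  have hS₀sub' : ∀ p ∈ S₀,
      -p ∈ ((fun f => (f, (-1 : ℝ))) '' ((-2 : ℝ) • orderPoly P lem)) := by
    rintro p (rfl | ⟨s, rfl⟩)
    · refine ⟨0, ⟨0, hzerom, smul_zero _⟩, ?_⟩
      simp [Prod.ext_iff]
    · refine ⟨(-2 : ℝ) • χ s, ⟨χ s, hχmem lem hlm s, rfl⟩, ?_⟩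
      simp [Prod.ext_iff, neg_smul]
  have hSsub : S ⊆ (((fun f => (f, (1 : ℝ))) '' ((2 : ℝ) • orderPoly P lep)) ∪
      ((fun f => (f, (-1 : ℝ))) '' ((-2 : ℝ) • orderPoly P lem))) := by
    rintro p (hp | hp)
    · exact Or.inl (hS₀sub p hp)
    · rw [Set.mem_neg] at hp
      have := hS₀sub' (-p) hp
      rw [neg_neg] at this
      exact Or.inr this
  have hKsub : convexHull ℝ S ⊆ doubleOrderPoly P lep lem := by
    rw [doubleOrderPoly]
    exact convexHull_mono hSsub
  -- membership facts
  have hmem01 : ((0 : P → ℝ), (1 : ℝ)) ∈ S := Or.inl (Set.mem_insert _ _)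
  have hmem01' : ((0 : P → ℝ), (-1 : ℝ)) ∈ S := by
    refine Or.inr ?_
    have hneg : -(((0 : P → ℝ), (-1 : ℝ)) : (P → ℝ) × ℝ) = ((0 : P → ℝ), (1 : ℝ)) := by
      simp [Prod.ext_iff]
    rw [Set.mem_neg, hneg]
    exact Set.mem_insert _ _
  have hmemχ : ∀ s, (((2 : ℝ) • χ s : P → ℝ), (1 : ℝ)) ∈ S :=
    fun s => Or.inl (Set.mem_insert_of_mem _ ⟨s, rfl⟩)
  -- vectorSpan is everything
  set V := vectorSpan ℝ S with hV
  have hv1 : ((0 : P → ℝ), (2 : ℝ)) ∈ V := by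
    have := vsub_mem_vectorSpan ℝ hmem01 hmem01'
    convert this using 1
    simp [vsub_eq_sub, Prod.ext_iff]
    norm_num
  have hv2 : ∀ s, (((2 : ℝ) • χ s : P → ℝ), (0 : ℝ)) ∈ V := by
    intro s
    have := vsub_mem_vectorSpan ℝ (hmemχ s) hmem01
    simpa [vsub_eq_sub, Prod.ext_iff] using this
  have hχV : ∀ s, ((χ s : P → ℝ), (0 : ℝ)) ∈ V := by
    intro s
    have := V.smul_mem (1/2 : ℝ) (hv2 s)
    convert this using 1
    rw [Prod.smul_mk, smul_smul]
    norm_num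
  have hχsum : ∀ t, χ t = ∑ u ∈ Finset.univ.filter (fun u => l t u), (Pi.single u 1 : P → ℝ) := by
    intro t
    funext x
    simp only [χ, Finset.sum_apply, Pi.single_apply]
    rw [Finset.sum_ite_eq]
    simp
  have hsingle : ∀ t : P, ((Pi.single t 1 : P → ℝ), (0 : ℝ)) ∈ V := by
    suffices H : ∀ n : ℕ, ∀ t : P, (Finset.univ.filter fun u => l t u ∧ u ≠ t).card < n →
        ((Pi.single t 1 : P → ℝ), (0 : ℝ)) ∈ V by
      intro t
      exact H _ t (Nat.lt_succ_self _)
    intro n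
    induction n with
    | zero => intro t ht; omega
    | succ n ih =>
      intro t ht
      have hsum : ∀ u ∈ Finset.univ.filter (fun u => l t u ∧ u ≠ t),
          ((Pi.single u 1 : P → ℝ), (0 : ℝ)) ∈ V := by
        intro u hu
        simp only [Finset.mem_filter, Finset.mem_univ, true_and] at hu
        obtain ⟨htu, hut⟩ := hu
        apply ih
        have hss : (Finset.univ.filter fun v => l u v ∧ v ≠ u) ⊂
            (Finset.univ.filter fun v => l t v ∧ v ≠ t) := by
          rw [Finset.ssubset_iff_of_subset]
          · refine ⟨u, ?_, ?_⟩
            · simp [htu, hut]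
            · simp
          · intro v hv
            simp only [Finset.mem_filter, Finset.mem_univ, true_and] at hv ⊢
            obtain ⟨huv, hvu⟩ := hv
            refine ⟨_root_.trans_of l htu huv, fun hvt => ?_⟩
            subst hvt
            exact hut (_root_.antisymm_of l htu huv).symm
        have := Finset.card_lt_card hss
        omega
      have hfil : Finset.univ.filter (fun u => l t u) =
          insert t (Finset.univ.filter fun u => l t u ∧ u ≠ t) := by
        ext u
        simp only [Finset.mem_filter, Finset.mem_univ, true_and, Finset.mem_insert]
        constructor
        · intro h
          by_cases hu : u = t
          · exact Or.inl hu
          · exact Or.inr ⟨h, hu⟩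
        · rintro (rfl | ⟨h, -⟩)
          · exact _root_.refl_of l u
          · exact h
      have htnot : t ∉ (Finset.univ.filter fun u => l t u ∧ u ≠ t) := by simp
      have hid : ((Pi.single t 1 : P → ℝ), (0 : ℝ)) =
          ((χ t : P → ℝ), (0 : ℝ)) -
            ∑ u ∈ Finset.univ.filter (fun u => l t u ∧ u ≠ t),
              ((Pi.single u 1 : P → ℝ), (0 : ℝ)) := by
        refine Prod.ext ?_ ?_
        · show (Pi.single t 1 : P → ℝ) = _
          rw [Prod.fst_sub, Prod.fst_sum]
          simp only
          rw [hχsum t, hfil, Finset.sum_insert htnot]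
          abel
        · rw [Prod.snd_sub, Prod.snd_sum]
          simp
      rw [hid]
      exact V.sub_mem (hχV t) (V.sum_mem hsum)
  have htop : V = ⊤ := by
    rw [Submodule.eq_top_iff']
    rintro ⟨h, τ⟩
    have hrepr : ((h, τ) : (P → ℝ) × ℝ) =
        (∑ x : P, h x • ((Pi.single x 1 : P → ℝ), (0 : ℝ))) +
          (τ/2) • ((0 : P → ℝ), (2 : ℝ)) := by
      refine Prod.ext ?_ ?_
      · rw [Prod.fst_add, Prod.fst_sum]
        funext y
        simp [Finset.sum_apply, Pi.single_apply, mul_ite, Finset.sum_ite_eq]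
      · rw [Prod.snd_add, Prod.snd_sum]
        simp
        try ring
    rw [hrepr]
    exact V.add_mem (V.sum_mem fun x _ => V.smul_mem _ (hsingle x)) (V.smul_mem _ hv1)
  have hSne : S.Nonempty := ⟨_, hmem01⟩
  have haff : affineSpan ℝ S = ⊤ :=
    (AffineSubspace.affineSpan_eq_top_iff_vectorSpan_eq_top_of_nonempty ℝ ((P → ℝ) × ℝ)
      ((P → ℝ) × ℝ) hSne).mpr htop
  -- interior of convex hull of S is nonempty
  set K := convexHull ℝ S with hK
  have hKconv : Convex ℝ K := convex_convexHull ℝ S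
  have hKint : (interior K).Nonempty := by
    rw [hKconv.interior_nonempty_iff_affineSpan_eq_top, hK, affineSpan_convexHull]
    exact haff
  obtain ⟨x, hx⟩ := hKint
  -- symmetry of K
  have hSneg : -S = S := by
    ext p
    rw [Set.mem_neg]
    constructor
    · rintro (h | h)
      · exact Or.inr (Set.mem_neg.mpr h)
      · exact Or.inl (by rwa [Set.mem_neg, neg_neg] at h)
    · rintro (h | h)
      · exact Or.inr (Set.neg_mem_neg.mpr h)
      · exact Or.inl (Set.mem_neg.mp h)
  have hnegx : -x ∈ K := by
    have h1 : -x ∈ -K := Set.neg_mem_neg.mpr (interior_subset hx)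
    rwa [hK, ← convexHull_neg, hSneg] at h1
  have h0int : (0 : (P → ℝ) × ℝ) ∈ interior K := by
    have := hKconv.combo_interior_self_mem_interior hx hnegx
      (a := (1:ℝ)/2) (b := (1:ℝ)/2) (by norm_num) (by norm_num) (by norm_num)
    simpa [smul_neg] using this
  exact interior_mono hKsub h0int

end Backward

end DOPAux

/-- The origin lies in the interior of the double order polytope iff the double poset
is compatible. -/
theorem zero_mem_interior_doubleOrderPoly_iff_compatible
    (P : Type*) [Fintype P] (lep lem : P → P → Prop)
    (hp : IsPartialOrder P lep) (hm : IsPartialOrder P lem) :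
    ((fun _ => (0 : ℝ)), (0 : ℝ)) ∈ interior (doubleOrderPoly P lep lem) ↔
      Compatible P lep lem := by
  classical
  constructor
  · intro h0
    by_contra hcomp
    obtain ⟨c, hc0, hcp, hcm⟩ := DOPAux.exists_sep hp hm hcomp
    have hlin : IsLinearMap ℝ (fun p : (P → ℝ) × ℝ => DOPAux.pr c p.1) := by
      constructor
      · intro p q
        exact DOPAux.pr_add_right c p.1 q.1
      · intro a p
        have := DOPAux.pr_smul_right c a p.1
        simpa [smul_eq_mul] using this
    have hsub : doubleOrderPoly P lep lem ⊆ {p : (P → ℝ) × ℝ | 0 ≤ DOPAux.pr c p.1} := by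
      rw [doubleOrderPoly]
      apply convexHull_min
      · rintro p (⟨f, hf, rfl⟩ | ⟨f, hf, rfl⟩)
        · obtain ⟨f₀, hf₀, rfl⟩ := hf
          have h1 := hcp f₀ hf₀
          have h2 := DOPAux.pr_smul_right c 2 f₀
          simp only [Set.mem_setOf_eq]
          rw [h2]
          linarith
        · obtain ⟨g₀, hg₀, rfl⟩ := hf
          have h1 := hcm g₀ hg₀
          have h2 := DOPAux.pr_smul_right c (-2) g₀
          simp only [Set.mem_setOf_eq]
          rw [h2]
          linarith
      · exact convex_halfSpace_ge hlin 0
    rw [mem_interior_iff_mem_nhds, Metric.mem_nhds_iff] at h0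
    obtain ⟨ε, hε, hball⟩ := h0
    set δ := ε / (2 * (‖c‖ + 1)) with hδ
    have hc1 : (0:ℝ) < ‖c‖ + 1 := by positivity
    have hδpos : 0 < δ := by positivity
    have hmemball : (((-δ) • c, (0 : ℝ)) : (P → ℝ) × ℝ) ∈
        Metric.ball (((fun _ => (0:ℝ)) : P → ℝ), (0 : ℝ)) ε := by
      rw [Metric.mem_ball]
      have : dist (((-δ) • c, (0 : ℝ)) : (P → ℝ) × ℝ) ((fun _ => (0:ℝ)), (0 : ℝ))
          = ‖(-δ) • c‖ := by
        rw [show ((((fun _ => (0:ℝ)) : P → ℝ), (0 : ℝ)) : (P → ℝ) × ℝ) = 0 from rfl,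
          dist_zero_right, Prod.norm_def]
        simp
      rw [this, norm_smul]
      simp only [norm_neg, Real.norm_eq_abs, abs_of_pos hδpos]
      have hcle : ‖c‖ < ‖c‖ + 1 := by linarith
      calc δ * ‖c‖ ≤ δ * (‖c‖ + 1) := by nlinarith [norm_nonneg c]
        _ = ε / 2 := by rw [hδ]; field_simp
        _ < ε := by linarith
    have hmem := hsub (hball hmemball)
    simp only [Set.mem_setOf_eq] at hmem
    rw [DOPAux.pr_smul_right] at hmem
    have hpos := DOPAux.pr_pos_self hc0
    nlinarith
  · intro hcomp
    have := DOPAux.compat_mem_interior hcomp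
    exact this
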